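/- In the setting of Definition 4.1, with Q = [0,1]^{2n}, r ∈ (0,1/2), disjoint sub-cubes Q_j = τ_{(z_j,0)}(δ_r(Q)), and h: ∪Q_j → ℝ given on Q_j by h(w) = -2∑_{i=1}^n (z_{j,i}w_{i+n} - z_{j,i+n}w_i), the operator T(f) = L(f̃ + h), where f̃(w) = r²f((w - z_j)/r) on Q_j and L is a norm-preserving linear extension operator from C(∪Q_j) to C(Q), is a contraction on C(Q) with Lipschitz constant at most r² < 1; hence T has a unique fixed point φ ∈ C(Q) satisfying φ(w) = r²φ((w-z_j)/r) - 2∑_{i=1}^n (z_{j,i}w_{i+n} - z_{j,i+n}w_i) for w ∈ Q_j. -/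

import Mathlib

open Filter Topology
open scoped BigOperators

noncomputable section

/-- The unit cube `Q = [0,1]^{2n} ⊂ ℝ^{2n}`; coordinates are indexed by `Fin n ⊕ Fin n`,
`Sum.inl i` standing for coordinate `i ≤ n` and `Sum.inr i` for coordinate `n + i`. -/
def Qcube (n : ℕ) : Set (Fin n ⊕ Fin n → ℝ) := {w | ∀ i, w i ∈ Set.Icc (0 : ℝ) 1}

/-- The `2^{2n}` corner points `z_j`, with coordinates in `{0, 1-r}`, indexed by boolean
functions `b`. -/
def zpt {n : ℕ} (r : ℝ) (b : Fin n ⊕ Fin n → Bool) : Fin n ⊕ Fin n → ℝ :=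
  fun i => if b i then 1 - r else 0

/-- The sub-cube `Q_j = z_j + rQ`. -/
def Qj {n : ℕ} (r : ℝ) (b : Fin n ⊕ Fin n → Bool) : Set (Fin n ⊕ Fin n → ℝ) :=
  (fun w => zpt r b + r • w) '' Qcube n

/-- `B = ∪_j Q_j`. -/
def Bset (n : ℕ) (r : ℝ) : Set (Fin n ⊕ Fin n → ℝ) := ⋃ b, Qj r b

/-- The affine function `h` on the cube `Q_j`:
`h(w) = -2 ∑_{i=1}^n (z_{j,i} w_{n+i} - z_{j,n+i} w_i)`. -/
def hfun {n : ℕ} (r : ℝ) (b : Fin n ⊕ Fin n → Bool) (w : Fin n ⊕ Fin n → ℝ) : ℝ :=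
  -2 * ∑ i : Fin n, (zpt r b (Sum.inl i) * w (Sum.inr i) - zpt r b (Sum.inr i) * w (Sum.inl i))

/-- The sup norm of `|f|` over a set. -/
def supOn {n : ℕ} (f : (Fin n ⊕ Fin n → ℝ) → ℝ) (S : Set (Fin n ⊕ Fin n → ℝ)) : ℝ :=
  sSup ((fun x => |f x|) '' S)

-- helpers
def clampQ (n : ℕ) (x : Fin n ⊕ Fin n → ℝ) : Fin n ⊕ Fin n → ℝ :=
  fun i => max 0 (min (x i) 1)

lemma clampQ_mem {n : ℕ} (x : Fin n ⊕ Fin n → ℝ) : clampQ n x ∈ Qcube n := fun i =>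
  ⟨le_max_left _ _, max_le (by norm_num) (min_le_right _ _)⟩

lemma clampQ_eq_of_mem {n : ℕ} {x : Fin n ⊕ Fin n → ℝ} (hx : x ∈ Qcube n) : clampQ n x = x := by
  funext i
  have h := hx i
  simp only [clampQ, min_eq_left h.2, max_eq_right h.1]

lemma continuous_clampQ {n : ℕ} : Continuous (clampQ n) := by
  apply continuous_pi; intro i
  exact continuous_const.max ((continuous_apply i).min continuous_const)

lemma isCompact_Qcube {n : ℕ} : IsCompact (Qcube n) := by
  have : Qcube n = Set.pi Set.univ (fun _ : Fin n ⊕ Fin n => Set.Icc (0:ℝ) 1) := by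
    ext x; simp only [Qcube, Set.mem_setOf_eq, Set.mem_univ_pi]
  rw [this]
  exact isCompact_univ_pi fun _ => isCompact_Icc

lemma zero_mem_Qcube {n : ℕ} : (0 : Fin n ⊕ Fin n → ℝ) ∈ Qcube n := fun i => by
  simp [Set.mem_Icc]

lemma Qcube_nonempty {n : ℕ} : (Qcube n).Nonempty := ⟨0, zero_mem_Qcube⟩

lemma Qj_subset_Qcube {n : ℕ} {r : ℝ} (hr0 : 0 < r) (hr1 : r < 1/2)
    (b : Fin n ⊕ Fin n → Bool) : Qj r b ⊆ Qcube n := by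
  rintro _ ⟨v, hv, rfl⟩ i
  have hv' := hv i
  simp only [Set.mem_Icc] at hv' ⊢
  simp only [Pi.add_apply, Pi.smul_apply, smul_eq_mul, zpt]
  split_ifs <;> constructor <;> nlinarith [hv'.1, hv'.2]

lemma isClosed_Qj {n : ℕ} (r : ℝ) (b : Fin n ⊕ Fin n → Bool) : IsClosed (Qj r b) :=
  (isCompact_Qcube.image (continuous_const.add (continuous_id.const_smul r))).isClosed

lemma scale_eq {n : ℕ} {r : ℝ} (hr0 : r ≠ 0) (b : Fin n ⊕ Fin n → Bool)
    (v : Fin n ⊕ Fin n → ℝ) : r⁻¹ • ((zpt r b + r • v) - zpt r b) = v := by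
  rw [add_sub_cancel_left, smul_smul, inv_mul_cancel₀ hr0, one_smul]

lemma scale_mem {n : ℕ} {r : ℝ} (hr0 : r ≠ 0) {b : Fin n ⊕ Fin n → Bool}
    {w : Fin n ⊕ Fin n → ℝ} (hw : w ∈ Qj r b) : r⁻¹ • (w - zpt r b) ∈ Qcube n := by
  obtain ⟨v, hv, rfl⟩ := hw
  rw [scale_eq hr0]; exact hv

lemma continuous_scale {n : ℕ} (r : ℝ) (b : Fin n ⊕ Fin n → Bool) :
    Continuous (fun w : Fin n ⊕ Fin n → ℝ => r⁻¹ • (w - zpt r b)) :=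
  (continuous_id.sub continuous_const).const_smul r⁻¹

lemma continuous_hfun {n : ℕ} (r : ℝ) (b : Fin n ⊕ Fin n → Bool) :
    Continuous (hfun r b) := by
  unfold hfun
  exact continuous_const.mul (continuous_finset_sum _ fun i _ =>
    (continuous_const.mul (continuous_apply _)).sub
      (continuous_const.mul (continuous_apply _)))

lemma continuousOn_Bset_of_pieces {n : ℕ} {r : ℝ} {F : (Fin n ⊕ Fin n → ℝ) → ℝ}
    (h : ∀ b, ContinuousOn F (Qj r b)) : ContinuousOn F (Bset n r) :=
  (locallyFinite_of_finite _).continuousOn_iUnion (fun b => isClosed_Qj r b) h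

lemma supOn_le {n : ℕ} {F : (Fin n ⊕ Fin n → ℝ) → ℝ} {S : Set (Fin n ⊕ Fin n → ℝ)} {c : ℝ}
    (hc : 0 ≤ c) (h : ∀ w ∈ S, |F w| ≤ c) : supOn F S ≤ c :=
  Real.sSup_le (by rintro t ⟨w, hw, rfl⟩; exact h w hw) hc

/-- with `L` a norm-preserving linear extension operator from `C(B)` to
`C(Q)`, `f̃` the rescaling `f̃(w) = r² f((w - z_j)/r)` on `Q_j`, and `h` as above, the
operator `T(f) = L(f̃ + h)` is an `r²`-contraction (`r² < 1`) on `C(Q)` and has a unique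
fixed point `φ` satisfying `φ(w) = r² φ((w - z_j)/r) - 2∑ (z_{j,i}w_{n+i} - z_{j,n+i}w_i)`
on each `Q_j`. -/
theorem extension_operator_contraction_fixed_point (n : ℕ) (r : ℝ)
    (hr : r ∈ Set.Ioo (0 : ℝ) (1 / 2))
    (L : ((Fin n ⊕ Fin n → ℝ) → ℝ) → ((Fin n ⊕ Fin n → ℝ) → ℝ))
    (hLadd : ∀ f g : (Fin n ⊕ Fin n → ℝ) → ℝ, ∀ x ∈ Qcube n, L (f + g) x = L f x + L g x)
    (hLsmul : ∀ (c : ℝ) (f : (Fin n ⊕ Fin n → ℝ) → ℝ), ∀ x ∈ Qcube n, L (c • f) x = c * L f x)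
    (hLext : ∀ f : (Fin n ⊕ Fin n → ℝ) → ℝ, ∀ x ∈ Bset n r, L f x = f x)
    (hLcont : ∀ f : (Fin n ⊕ Fin n → ℝ) → ℝ,
      ContinuousOn f (Bset n r) → ContinuousOn (L f) (Qcube n))
    (hLnorm : ∀ f : (Fin n ⊕ Fin n → ℝ) → ℝ, supOn (L f) (Qcube n) = supOn f (Bset n r))
    (ftil : ((Fin n ⊕ Fin n → ℝ) → ℝ) → ((Fin n ⊕ Fin n → ℝ) → ℝ))
    (hftil : ∀ (f : (Fin n ⊕ Fin n → ℝ) → ℝ) (b : Fin n ⊕ Fin n → Bool), ∀ w ∈ Qj r b,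
      ftil f w = r ^ 2 * f (r⁻¹ • (w - zpt r b)))
    (hB : (Fin n ⊕ Fin n → ℝ) → ℝ)
    (hhB : ∀ b : Fin n ⊕ Fin n → Bool, ∀ w ∈ Qj r b, hB w = hfun r b w) :
    r ^ 2 < 1 ∧
    (∀ f g : (Fin n ⊕ Fin n → ℝ) → ℝ,
      supOn (fun x => L (ftil f + hB) x - L (ftil g + hB) x) (Qcube n) ≤
        r ^ 2 * supOn (fun x => f x - g x) (Qcube n)) ∧
    (∃ φ : (Fin n ⊕ Fin n → ℝ) → ℝ, ContinuousOn φ (Qcube n) ∧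
      (∀ x ∈ Qcube n, L (ftil φ + hB) x = φ x) ∧
      (∀ b : Fin n ⊕ Fin n → Bool, ∀ w ∈ Qj r b,
        φ w = r ^ 2 * φ (r⁻¹ • (w - zpt r b)) + hfun r b w) ∧
      (∀ ψ : (Fin n ⊕ Fin n → ℝ) → ℝ, ContinuousOn ψ (Qcube n) →
        (∀ x ∈ Qcube n, L (ftil ψ + hB) x = ψ x) → ∀ x ∈ Qcube n, ψ x = φ x)) := by
  obtain ⟨hr0, hr1⟩ := hr
  have hrne : r ≠ 0 := ne_of_gt hr0
  have hr2pos : (0:ℝ) < r ^ 2 := by positivity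
  have hr2 : r ^ 2 < 1 := by nlinarith
  -- linearity of L for differences
  have hsub : ∀ F G : (Fin n ⊕ Fin n → ℝ) → ℝ, ∀ x ∈ Qcube n,
      L F x - L G x = L (F - G) x := by
    intro F G x hx
    have h1 := hLadd G (F - G) x hx
    have h2 : G + (F - G) = F := by funext w; simp
    rw [h2] at h1; linarith
  -- key pointwise bound
  have key : ∀ F : (Fin n ⊕ Fin n → ℝ) → ℝ, ContinuousOn F (Bset n r) →
      ∀ x ∈ Qcube n, |L F x| ≤ supOn F (Bset n r) := by
    intro F hF x hx
    have hc : ContinuousOn (fun x => |L F x|) (Qcube n) := (hLcont F hF).abs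
    have hbdd : BddAbove ((fun x => |L F x|) '' Qcube n) :=
      isCompact_Qcube.bddAbove_image hc
    have hle : |L F x| ≤ sSup ((fun x => |L F x|) '' Qcube n) :=
      le_csSup hbdd ⟨x, hx, rfl⟩
    have : sSup ((fun x => |L F x|) '' Qcube n) = supOn F (Bset n r) := hLnorm F
    linarith
  refine ⟨hr2, ?_, ?_⟩
  · -- contraction estimate for arbitrary f g
    intro f g
    set F := ftil f + hB with hF
    set G := ftil g + hB with hG
    set D := F - G with hD
    have hDval : ∀ b : Fin n ⊕ Fin n → Bool, ∀ w ∈ Qj r b,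
        D w = r ^ 2 * (f (r⁻¹ • (w - zpt r b)) - g (r⁻¹ • (w - zpt r b))) := by
      intro b w hw
      have h1 := hftil f b w hw
      have h2 := hftil g b w hw
      simp only [hD, hF, hG, Pi.sub_apply, Pi.add_apply]
      rw [h1, h2]; ring
    have himg : (fun x => |L F x - L G x|) '' Qcube n = (fun x => |L D x|) '' Qcube n :=
      Set.image_congr fun x hx => by rw [hsub F G x hx]
    have hLHS : supOn (fun x => L F x - L G x) (Qcube n) = supOn D (Bset n r) := by
      have : supOn (fun x => L F x - L G x) (Qcube n) = supOn (L D) (Qcube n) :=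
        congrArg sSup himg
      rw [this, hLnorm]
    rw [hLHS]
    set S := (fun x => |f x - g x|) '' Qcube n with hS
    have hSne : S.Nonempty := ⟨_, ⟨0, zero_mem_Qcube, rfl⟩⟩
    by_cases hbdd : BddAbove S
    · have hsup0 : 0 ≤ sSup S := by
        obtain ⟨t, ⟨y, hy, rfl⟩⟩ := hSne
        exact le_trans (abs_nonneg _) (le_csSup hbdd ⟨y, hy, rfl⟩)
      apply supOn_le (by positivity)
      intro w hw
      obtain ⟨b, hwb⟩ := Set.mem_iUnion.1 hw
      rw [hDval b w hwb, abs_mul, abs_of_nonneg (le_of_lt hr2pos)]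
      have hy : r⁻¹ • (w - zpt r b) ∈ Qcube n := scale_mem hrne hwb
      have : |f (r⁻¹ • (w - zpt r b)) - g (r⁻¹ • (w - zpt r b))| ≤ sSup S :=
        le_csSup hbdd ⟨_, hy, rfl⟩
      exact mul_le_mul_of_nonneg_left this (le_of_lt hr2pos)
    · -- unbounded case: RHS = 0 and LHS = 0
      have hRHS : supOn (fun x => f x - g x) (Qcube n) = 0 := Real.sSup_of_not_bddAbove hbdd
      have hTbdd : ¬ BddAbove ((fun w => |D w|) '' Bset n r) := by
        rintro ⟨M, hM⟩
        apply hbdd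
        refine ⟨M / r ^ 2, ?_⟩
        rintro t ⟨y, hy, rfl⟩
        have hwmem : zpt r (fun _ => false) + r • y ∈ Qj r (fun _ => false) := ⟨y, hy, rfl⟩
        have hval := hDval (fun _ => false) _ hwmem
        rw [scale_eq hrne] at hval
        have hmem : |D (zpt r (fun _ => false) + r • y)| ∈ (fun w => |D w|) '' Bset n r :=
          ⟨_, Set.mem_iUnion.2 ⟨fun _ => false, hwmem⟩, rfl⟩
        have hMle := hM hmem
        rw [hval, abs_mul, abs_of_nonneg (le_of_lt hr2pos)] at hMle
        rw [le_div_iff₀ hr2pos]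
        linarith [mul_comm (r^2) (|f y - g y|)]
      have : supOn D (Bset n r) = 0 := Real.sSup_of_not_bddAbove hTbdd
      rw [this, hRHS, mul_zero]
  · -- fixed point
    haveI : CompactSpace (Qcube n) := isCompact_iff_compactSpace.mp isCompact_Qcube
    haveI : Nonempty C(↥(Qcube n), ℝ) := ⟨ContinuousMap.const _ 0⟩
    -- extension of a continuous map on the cube to all of ℝ^{2n}
    set ext : C(↥(Qcube n), ℝ) → ((Fin n ⊕ Fin n → ℝ) → ℝ) :=
      fun u x => u ⟨clampQ n x, clampQ_mem x⟩ with hext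
    have hextc : ∀ u, Continuous (ext u) := fun u =>
      u.continuous.comp (continuous_clampQ.subtype_mk _)
    have hexteq : ∀ u, ∀ x (hx : x ∈ Qcube n), ext u x = u ⟨x, hx⟩ := by
      intro u x hx
      simp only [hext]
      congr 1
      exact Subtype.ext (clampQ_eq_of_mem hx)
    -- continuity of the glued integrand
    have hglue : ∀ g : (Fin n ⊕ Fin n → ℝ) → ℝ, Continuous g →
        ContinuousOn (ftil g + hB) (Bset n r) := by
      intro g hg
      apply continuousOn_Bset_of_pieces
      intro b
      refine ContinuousOn.congr
        (f := fun w => r ^ 2 * g (r⁻¹ • (w - zpt r b)) + hfun r b w) ?_ ?_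
      · exact ((continuous_const.mul (hg.comp (continuous_scale r b))).add
          (continuous_hfun r b)).continuousOn
      · intro w hw
        simp only [Pi.add_apply]
        rw [hftil g b w hw, hhB b w hw]
    have hglue2 : ∀ u v : C(↥(Qcube n), ℝ),
        ContinuousOn ((ftil (ext u) + hB) - (ftil (ext v) + hB)) (Bset n r) := by
      intro u v
      apply continuousOn_Bset_of_pieces
      intro b
      refine ContinuousOn.congr
        (f := fun w => r ^ 2 * (ext u (r⁻¹ • (w - zpt r b)) - ext v (r⁻¹ • (w - zpt r b)))) ?_ ?_
      · exact (continuous_const.mul (((hextc u).comp (continuous_scale r b)).sub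
          ((hextc v).comp (continuous_scale r b)))).continuousOn
      · intro w hw
        simp only [Pi.sub_apply, Pi.add_apply]
        rw [hftil (ext u) b w hw, hftil (ext v) b w hw]; ring
    -- the operator on C(Q)
    set Θ : C(↥(Qcube n), ℝ) → C(↥(Qcube n), ℝ) :=
      fun u => ⟨(Qcube n).restrict (L (ftil (ext u) + hB)),
        ContinuousOn.restrict (hLcont _ (hglue (ext u) (hextc u)))⟩ with hΘ
    have hΘapp : ∀ u x (hx : x ∈ Qcube n), Θ u ⟨x, hx⟩ = L (ftil (ext u) + hB) x := by
      intro u x hx; rfl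
    -- contraction
    have hdist : ∀ u v : C(↥(Qcube n), ℝ), dist (Θ u) (Θ v) ≤ r ^ 2 * dist u v := by
      intro u v
      rw [ContinuousMap.dist_le (by positivity)]
      rintro ⟨x, hx⟩
      rw [Real.dist_eq, hΘapp u x hx, hΘapp v x hx,
        hsub _ _ x hx]
      refine le_trans (key _ (hglue2 u v) x hx) ?_
      apply supOn_le (by positivity)
      intro w hw
      obtain ⟨b, hwb⟩ := Set.mem_iUnion.1 hw
      have hy : r⁻¹ • (w - zpt r b) ∈ Qcube n := scale_mem hrne hwb
      have hval : ((ftil (ext u) + hB) - (ftil (ext v) + hB)) w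
          = r ^ 2 * (u ⟨_, hy⟩ - v ⟨_, hy⟩) := by
        simp only [Pi.sub_apply, Pi.add_apply]
        rw [hftil (ext u) b w hwb, hftil (ext v) b w hwb,
          hexteq u _ hy, hexteq v _ hy]
        ring
      rw [hval, abs_mul, abs_of_nonneg (le_of_lt hr2pos)]
      have : |u ⟨_, hy⟩ - v ⟨_, hy⟩| ≤ dist u v := by
        rw [← Real.dist_eq]
        exact ContinuousMap.dist_apply_le_dist _
      exact mul_le_mul_of_nonneg_left this (le_of_lt hr2pos)
    have hcontr : ContractingWith ⟨r ^ 2, le_of_lt hr2pos⟩ Θ := by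
      constructor
      · exact_mod_cast hr2
      · apply LipschitzWith.of_dist_le_mul
        intro u v
        exact_mod_cast hdist u v
    set φ₀ := ContractingWith.fixedPoint Θ hcontr with hφ₀
    have hfix : Θ φ₀ = φ₀ := hcontr.fixedPoint_isFixedPt
    refine ⟨ext φ₀, (hextc φ₀).continuousOn, ?_, ?_, ?_⟩
    · -- fixed point equation on Q
      intro x hx
      have := congrArg (fun u : C(↥(Qcube n), ℝ) => u ⟨x, hx⟩) hfix
      rw [hΘapp φ₀ x hx] at this
      rw [this, hexteq φ₀ x hx]
    · -- self-similarity on each sub-cube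
      intro b w hw
      have hwQ : w ∈ Qcube n := Qj_subset_Qcube hr0 hr1 b hw
      have hwB : w ∈ Bset n r := Set.mem_iUnion.2 ⟨b, hw⟩
      have h1 := congrArg (fun u : C(↥(Qcube n), ℝ) => u ⟨w, hwQ⟩) hfix
      rw [hΘapp φ₀ w hwQ] at h1
      have h2 := hLext (ftil (ext φ₀) + hB) w hwB
      rw [h2] at h1
      have h3 : (ftil (ext φ₀) + hB) w
          = r ^ 2 * ext φ₀ (r⁻¹ • (w - zpt r b)) + hfun r b w := by
        simp only [Pi.add_apply]
        rw [hftil (ext φ₀) b w hw, hhB b w hw]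
      rw [h3] at h1
      rw [hexteq φ₀ w hwQ, ← h1]
    · -- uniqueness
      intro ψ hψc hψfix x hx
      set ψh : C(↥(Qcube n), ℝ) := ⟨(Qcube n).restrict ψ, hψc.restrict⟩ with hψh
      have hψapp : ∀ y (hy : y ∈ Qcube n), ψh ⟨y, hy⟩ = ψ y := fun y hy => rfl
      have hψfix' : Θ ψh = ψh := by
        ext ⟨y, hy⟩
        rw [hΘapp ψh y hy, hψapp y hy]
        -- L (ftil (ext ψh) + hB) y = L (ftil ψ + hB) y since the arguments agree on B
        have hD0 : ∀ w ∈ Bset n r,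
            ((ftil (ext ψh) + hB) - (ftil ψ + hB)) w = 0 := by
          intro w hw
          obtain ⟨b, hwb⟩ := Set.mem_iUnion.1 hw
          have hy' : r⁻¹ • (w - zpt r b) ∈ Qcube n := scale_mem hrne hwb
          simp only [Pi.sub_apply, Pi.add_apply]
          rw [hftil (ext ψh) b w hwb, hftil ψ b w hwb, hexteq ψh _ hy', hψapp _ hy']
          ring
        have hDc : ContinuousOn ((ftil (ext ψh) + hB) - (ftil ψ + hB)) (Bset n r) :=
          ContinuousOn.congr continuousOn_const hD0
        have hb := key _ hDc y hy
        have hs : supOn ((ftil (ext ψh) + hB) - (ftil ψ + hB)) (Bset n r) ≤ 0 :=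
          supOn_le le_rfl (fun w hw => by rw [hD0 w hw]; simp)
        have h0 : L ((ftil (ext ψh) + hB) - (ftil ψ + hB)) y = 0 := by
          have := abs_nonneg (L ((ftil (ext ψh) + hB) - (ftil ψ + hB)) y)
          have habs : |L ((ftil (ext ψh) + hB) - (ftil ψ + hB)) y| = 0 := le_antisymm (le_trans hb hs) this
          exact abs_eq_zero.mp habs
        have hdiff := hsub (ftil (ext ψh) + hB) (ftil ψ + hB) y hy
        rw [h0] at hdiff
        have : L (ftil (ext ψh) + hB) y = L (ftil ψ + hB) y := by linarith
        rw [this, hψfix y hy]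
      have hψeq : ψh = φ₀ := hcontr.fixedPoint_unique hψfix'
      have : ψ x = ψh ⟨x, hx⟩ := rfl
      rw [this, hψeq, ← hexteq φ₀ x hx]
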